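/- arXiv:1211.1547 — 2 statements merged into one kernel-verified Lean document; each statement's English description precedes it below -/
import Mathlib

section
/- Assume (A1): for every x ∈ 𝕏 and u ∈ 𝕌 there exists θ ∈ Θ with T(x) = T(a(θ,u)). Then for every x ∈ 𝕏, the set {u ∈ 𝕌 : g(u) < T(x)} is contained in {u ∈ 𝕌 : Θ_x(u) ≠ ∅ and Θ_x(u) ⊆ Θ ∖ Θ0}; consequently, taking closures, S_{T(x)} ⊆ 𝕌_x(Θ ∖ Θ0). -/
open Set

/-- Under A1, `{u : g(u) < T(x)} ⊆ {u : Θ_x(u) ≠ ∅ and Θ_x(u) ⊆ Θ ∖ Θ0}`;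
consequently, taking closures, `S_{T(x)} ⊆ 𝕌_x(Θ ∖ Θ0)`. -/
theorem S_Tx_subset_Ux
    {U : Type*} [TopologicalSpace U]
    {Θ 𝕏 : Type*} (a : Θ → U → 𝕏) (T : 𝕏 → ℝ) (Θ0 : Set Θ)
    (hΘ0 : Θ0.Nonempty)
    -- g(u) = sup_{θ ∈ Θ0} T(a(θ,u)), assumed finite
    (g : U → ℝ)
    (hg : ∀ u, IsLUB {r : ℝ | ∃ θ ∈ Θ0, r = T (a θ u)} (g u))
    -- (A1)
    (A1 : ∀ (x : 𝕏) (u : U), ∃ θ : Θ, T x = T (a θ u)) :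
    ∀ x : 𝕏,
      {u | g u < T x} ⊆
        {u | {θ | T x = T (a θ u)}.Nonempty ∧ {θ | T x = T (a θ u)} ⊆ Θ0ᶜ} ∧
      closure {u | g u < T x} ⊆ closure {u | {θ | T x = T (a θ u)} ⊆ Θ0ᶜ} := by
  intro x
  have hsub : {u | g u < T x} ⊆
      {u | {θ | T x = T (a θ u)}.Nonempty ∧ {θ | T x = T (a θ u)} ⊆ Θ0ᶜ} := by
    intro u hu
    refine ⟨A1 x u, fun θ hθ hθ0 => ?_⟩
    have hle : T (a θ u) ≤ g u := (hg u).1 ⟨θ, hθ0, rfl⟩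
    rw [← hθ] at hle
    exact absurd hu (not_lt.2 hle)
  exact ⟨hsub, closure_mono fun u hu => (hsub hu).2⟩
end

section
/- Assume each S_t is measurable and, for the fixed θ and A with θ ∈ A, the map u ↦ Q(𝕌_{a(θ,u)}(Θ ∖ A)) is measurable. Then the inferential model is valid at A in the sense that for every α ∈ (0,1): P_U{u ∈ 𝕌 : pl_{a(θ,u)}(A) ≤ α} ≤ α, where pl_x(A) = 1 − Q(𝕌_x(Θ ∖ A)). -/
open MeasureTheory Set ENNReal

/-- Every nonempty set of reals has a countable coinitial sequence inside it. -/
lemma exists_coinitial_seq (T' : Set ℝ) (hne : T'.Nonempty) :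
    ∃ t : ℕ → ℝ, (∀ n, t n ∈ T') ∧ ∀ s ∈ T', ∃ n, t n ≤ s := by
  by_cases hbdd : BddBelow T'
  · by_cases hmem : sInf T' ∈ T'
    · exact ⟨fun _ => sInf T', fun _ => hmem, fun s hs => ⟨0, csInf_le hbdd hs⟩⟩
    · have h : ∀ n : ℕ, ∃ x ∈ T', x < sInf T' + 1 / (n + 1) := fun n =>
        Real.lt_sInf_add_pos hne (by positivity)
      choose t ht hlt using h
      refine ⟨t, ht, fun s hs => ?_⟩
      have hgt : sInf T' < s :=
        lt_of_le_of_ne (csInf_le hbdd hs) (fun h => hmem (h ▸ hs))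
      obtain ⟨n, hn⟩ := exists_nat_one_div_lt (sub_pos.mpr hgt)
      exact ⟨n, le_of_lt (lt_of_lt_of_le (hlt n) (by linarith))⟩
  · have h : ∀ n : ℕ, ∃ x ∈ T', x < -(n : ℝ) := by
      intro n; by_contra hc; push_neg at hc
      exact hbdd ⟨-(n : ℝ), fun x hx => hc x hx⟩
    choose t ht hlt using h
    refine ⟨t, ht, fun s hs => ?_⟩
    obtain ⟨n, hn⟩ := exists_nat_ge (-s)
    exact ⟨n, le_of_lt (lt_of_lt_of_le (hlt n) (by linarith))⟩

/-- **IM validity (Theorem 1 of the paper).**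
For a nested family `(S_t)` of measurable predictive sets and the plausibility
`pl_x(A) = 1 − Q(𝕌_x(Θ∖A))`, if `θ ∈ A` then for every `α ∈ (0,1)`,
`P_U{u : pl_{a(θ,u)}(A) ≤ α} ≤ α`. -/
theorem IM_validity
    {U : Type*} [MeasurableSpace U]
    (P : Measure U) [IsProbabilityMeasure P]
    {Θ 𝕏 : Type*} (a : Θ → U → 𝕏) (T : 𝕏 → ℝ)
    -- (S_t) a nondecreasing family of measurable subsets of 𝕌
    (S : ℝ → Set U)
    (hSmeas : ∀ t : ℝ, MeasurableSet (S t))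
    (hSmono : Monotone S)
    -- 𝕌_x(B) = {u : Θ_x(u) ⊆ B} (no closure taken)
    (Ux : 𝕏 → Set Θ → Set U)
    (hUx : ∀ x B, Ux x B = {u | {θ | T x = T (a θ u)} ⊆ B})
    -- Q(K) = sup({P(S_t) : S_t ⊆ K} ∪ {0})
    (Q : Set U → ℝ≥0∞)
    (hQ : ∀ K : Set U, Q K = ⨆ t ∈ {t : ℝ | S t ⊆ K}, P (S t))
    -- fixed assertion A and true parameter value θ ∈ A
    (A : Set Θ) (θ : Θ) (hθ : θ ∈ A)
    -- measurability of u ↦ Q(𝕌_{a(θ,u)}(Θ ∖ A))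
    (hmeas : Measurable fun u => Q (Ux (a θ u) Aᶜ)) :
    ∀ α : ℝ≥0∞, α ∈ Set.Ioo (0 : ℝ≥0∞) 1 →
      P {u | 1 - Q (Ux (a θ u) Aᶜ) ≤ α} ≤ α := by
  intro α hα
  obtain ⟨hα0, hα1⟩ := hα
  -- the key fact: u never belongs to its own 𝕌_{a(θ,u)}(Aᶜ)
  have hself : ∀ u : U, u ∉ Ux (a θ u) Aᶜ := by
    intro u hu
    rw [hUx] at hu
    exact (hu (show T (a θ u) = T (a θ u) from rfl)) hθ
  -- it suffices to show P E ≤ α + ε for every ε > 0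
  refine ENNReal.le_of_forall_pos_le_add (fun ε hε _ => ?_)
  set γ : ℝ≥0∞ := α + ε with hγdef
  by_cases hγ1 : 1 ≤ γ
  · calc P {u | 1 - Q (Ux (a θ u) Aᶜ) ≤ α} ≤ 1 := prob_le_one
    _ ≤ γ := hγ1
  push_neg at hγ1
  set c : ℝ≥0∞ := 1 - γ with hcdef
  -- c < 1 - α
  have hαγ : α < γ := ENNReal.lt_add_right (hα1.ne_top) (by exact_mod_cast hε.ne')
  have hc_lt : c < 1 - α := by
    apply ENNReal.sub_lt_of_lt_add hγ1.le
    have h1 : (1 : ℝ≥0∞) - α + α = 1 := tsub_add_cancel_of_le hα1.le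
    calc (1 : ℝ≥0∞) = 1 - α + α := h1.symm
    _ < 1 - α + γ := by
        exact ENNReal.add_lt_add_left (by
          intro h
          exact (h ▸ (tsub_le_self : (1:ℝ≥0∞) - α ≤ 1)).not_gt (lt_of_lt_of_le one_lt_top le_top)) hαγ
  -- set E
  set E : Set U := {u | 1 - Q (Ux (a θ u) Aᶜ) ≤ α} with hEdef
  -- every u ∈ E has Q(...) > c
  have hE : ∀ u ∈ E, c < Q (Ux (a θ u) Aᶜ) := by
    intro u hu
    have h1 : (1 : ℝ≥0∞) - α ≤ Q (Ux (a θ u) Aᶜ) := by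
      rw [tsub_le_iff_left]
      exact tsub_le_iff_right.mp hu
    exact lt_of_lt_of_le hc_lt h1
  set T' : Set ℝ := {t | c < P (S t)} with hT'def
  by_cases hEne : E.Nonempty
  · -- T' is nonempty
    obtain ⟨u₀, hu₀⟩ := hEne
    have hT'ne : T'.Nonempty := by
      have := hE u₀ hu₀
      rw [hQ] at this
      simp only [lt_iSup_iff] at this
      obtain ⟨t, _, hct⟩ := this
      exact ⟨t, hct⟩
    obtain ⟨t, htmem, htco⟩ := exists_coinitial_seq T' hT'ne
    -- E ⊆ (⋂ n, S (t n))ᶜ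
    have hsub : E ⊆ (⋂ n, S (t n))ᶜ := by
      intro u hu
      have := hE u hu
      rw [hQ] at this
      simp only [lt_iSup_iff] at this
      obtain ⟨s, hsK, hcs⟩ := this
      obtain ⟨n, hn⟩ := htco s hcs
      simp only [mem_compl_iff, mem_iInter, not_forall]
      refine ⟨n, fun hmem => ?_⟩
      exact hself u (hsK (hSmono hn hmem))
    have hInter_meas : MeasurableSet (⋂ n, S (t n)) :=
      MeasurableSet.iInter (fun n => hSmeas (t n))
    -- measure of intersection
    have hdir : Directed (· ⊇ ·) (fun n => S (t n)) := by
      intro m n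
      rcases le_total (t m) (t n) with h | h
      · exact ⟨m, subset_rfl, hSmono h⟩
      · exact ⟨n, hSmono h, subset_rfl⟩
    have hInter : c ≤ P (⋂ n, S (t n)) := by
      rw [Directed.measure_iInter (fun n => (hSmeas (t n)).nullMeasurableSet) hdir
        ⟨0, measure_ne_top P _⟩]
      exact le_iInf fun n => (htmem n).le
    calc P E ≤ P ((⋂ n, S (t n))ᶜ) := measure_mono hsub
      _ = 1 - P (⋂ n, S (t n)) := prob_compl_eq_one_sub hInter_meas
      _ ≤ 1 - c := tsub_le_tsub_left hInter 1
      _ = γ := ENNReal.sub_sub_cancel one_ne_top hγ1.le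
  · rw [not_nonempty_iff_eq_empty] at hEne
    rw [hEne]
    simp
end
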